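/- Let V_n be the standard 2n-dimensional rational symplectic vector space and define (𝔞_n)_i = (V_n^{⊗(i+2)})^{ℤ_{i+2}}, the subspace of tensors invariant under cyclic permutation, with bracket [·,·]: (𝔞_n)_i ⊗ (𝔞_n)_j → (𝔞_n)_{i+j} induced by the contraction C_{1,i+3}: V_n^{⊗(i+2)} ⊗ V_n^{⊗(j+2)} → V_n^{⊗(i+j+2)} followed by cyclic symmetrization. Then this bracket is antisymmetric: [x,y] = −[y,x] for all x ∈ (𝔞_n)_i, y ∈ (𝔞_n)_j. -/

import Mathlib

open scoped TensorProduct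

abbrev Vn (n : ℕ) : Type := (Fin n ⊕ Fin n) → ℚ

def pvec (n : ℕ) (i : Fin n) : Vn n := Pi.single (Sum.inl i) 1

def qvec (n : ℕ) (i : Fin n) : Vn n := Pi.single (Sum.inr i) 1

instance (i j : ℕ) : NeZero (i + 1 + (j + 1)) := ⟨by omega⟩

lemma sum_pow_rotate {M : Type*} [AddCommGroup M] [Module ℚ M]
    (E : Module.End ℚ M) (N c : ℕ) (hNpos : 0 < N) (hN : E ^ N = 1) (z : M) :
    ∑ t ∈ Finset.range N, (E ^ (t + c)) z = ∑ t ∈ Finset.range N, (E ^ t) z := by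
  have hmod : ∀ a : ℕ, E ^ a = E ^ (a % N) := by
    intro a
    conv_lhs => rw [← Nat.div_add_mod a N, pow_add, pow_mul, hN, one_pow, one_mul]
  have hdm := Nat.div_add_mod c N
  have hr : c % N < N := Nat.mod_lt _ hNpos
  refine Finset.sum_nbij' (i := fun t => (t + c) % N)
    (j := fun t => (t + (N - c % N)) % N) ?_ ?_ ?_ ?_ ?_
  · intro a ha; exact Finset.mem_range.mpr (Nat.mod_lt _ hNpos)
  · intro a ha; exact Finset.mem_range.mpr (Nat.mod_lt _ hNpos)
  · intro a ha
    have ha' := Finset.mem_range.mp ha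
    show ((a + c) % N + (N - c % N)) % N = a
    rw [Nat.mod_add_mod]
    have h2 : a + c + (N - c % N) = a + N * (c / N + 1) := by rw [Nat.mul_succ]; omega
    rw [h2, Nat.add_mul_mod_self_left, Nat.mod_eq_of_lt ha']
  · intro a ha
    have ha' := Finset.mem_range.mp ha
    show ((a + (N - c % N)) % N + c) % N = a
    rw [Nat.mod_add_mod]
    have h2 : a + (N - c % N) + c = a + N * (c / N + 1) := by rw [Nat.mul_succ]; omega
    rw [h2, Nat.add_mul_mod_self_left, Nat.mod_eq_of_lt ha']
  · intro a ha
    rw [← hmod]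

lemma append_val {α : Type*} {m n : ℕ} (a : Fin m → α) (b : Fin n → α) (x : Fin (m + n)) :
    Fin.append a b x
      = if h : x.val < m then a ⟨x.val, h⟩ else b ⟨x.val - m, by omega⟩ := by
  rcases x with ⟨x, hx⟩
  unfold Fin.append Fin.addCases
  simp only [Fin.castLT, Fin.subNat, Fin.coe_cast]
  split
  · rfl
  · exact eq_rec_constant _ _

/-- The bracket on `𝔞ₙ`: on the cyclic invariants `(Vₙ^{⊗(i+2)})^{ℤ_{i+2}}`, it is the
contraction `C_{1,i+3}` (pairing the first factor of `x` with the first factor of `y`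
via `ω`) followed by cyclic symmetrization (averaging over the cyclic group).  This
bracket is antisymmetric: `[x,y] = −[y,x]`. -/
theorem stmt_4 (n i j : ℕ) (hi : 1 ≤ i) (hj : 1 ≤ j)
    (ω : Vn n →ₗ[ℚ] Vn n →ₗ[ℚ] ℚ)
    (hpq : ∀ a b, ω (pvec n a) (qvec n b) = if a = b then 1 else 0)
    (hqp : ∀ a b, ω (qvec n a) (pvec n b) = if a = b then -1 else 0)
    (hpp : ∀ a b, ω (pvec n a) (pvec n b) = 0)
    (hqq : ∀ a b, ω (qvec n a) (qvec n b) = 0)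
    -- cyclic rotation operators on the tensor powers
    (ρi : Module.End ℚ (⨂[ℚ] _ : Fin (i + 2), Vn n))
    (hρi : ∀ v : Fin (i + 2) → Vn n,
      ρi (PiTensorProduct.tprod ℚ v) = PiTensorProduct.tprod ℚ (fun t => v (t + 1)))
    (ρj : Module.End ℚ (⨂[ℚ] _ : Fin (j + 2), Vn n))
    (hρj : ∀ w : Fin (j + 2) → Vn n,
      ρj (PiTensorProduct.tprod ℚ w) = PiTensorProduct.tprod ℚ (fun t => w (t + 1)))
    (ρm : Module.End ℚ (⨂[ℚ] _ : Fin (i + 1 + (j + 1)), Vn n))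
    (hρm : ∀ u : Fin (i + 1 + (j + 1)) → Vn n,
      ρm (PiTensorProduct.tprod ℚ u) = PiTensorProduct.tprod ℚ (fun t => u (t + 1)))
    -- the contraction `C_{1,i+3}` in the two orders
    (C1 : (⨂[ℚ] _ : Fin (i + 2), Vn n) →ₗ[ℚ] (⨂[ℚ] _ : Fin (j + 2), Vn n) →ₗ[ℚ]
      (⨂[ℚ] _ : Fin (i + 1 + (j + 1)), Vn n))
    (hC1 : ∀ (v : Fin (i + 2) → Vn n) (w : Fin (j + 2) → Vn n),
      C1 (PiTensorProduct.tprod ℚ v) (PiTensorProduct.tprod ℚ w) =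
        ω (v 0) (w 0) •
          PiTensorProduct.tprod ℚ
            (Fin.append (fun t : Fin (i + 1) => v t.succ) (fun t : Fin (j + 1) => w t.succ)))
    (C2 : (⨂[ℚ] _ : Fin (j + 2), Vn n) →ₗ[ℚ] (⨂[ℚ] _ : Fin (i + 2), Vn n) →ₗ[ℚ]
      (⨂[ℚ] _ : Fin (i + 1 + (j + 1)), Vn n))
    (hC2 : ∀ (w : Fin (j + 2) → Vn n) (v : Fin (i + 2) → Vn n),
      C2 (PiTensorProduct.tprod ℚ w) (PiTensorProduct.tprod ℚ v) =
        ω (w 0) (v 0) •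
          PiTensorProduct.tprod ℚ
            (fun t : Fin (i + 1 + (j + 1)) =>
              Fin.append (fun s : Fin (j + 1) => w s.succ) (fun s : Fin (i + 1) => v s.succ)
                (Fin.cast (by omega) t)))
    (x : ⨂[ℚ] _ : Fin (i + 2), Vn n) (y : ⨂[ℚ] _ : Fin (j + 2), Vn n)
    (hx : ρi x = x) (hy : ρj y = y) :
    ((i + 1 + (j + 1) : ℚ))⁻¹ •
        ∑ t ∈ Finset.range (i + 1 + (j + 1)), (ρm ^ t) (C1 x y) =
      -(((i + 1 + (j + 1) : ℚ))⁻¹ •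
        ∑ t ∈ Finset.range (i + 1 + (j + 1)), (ρm ^ t) (C2 y x)) := by
  -- antisymmetry of ω
  have hω : ∀ a b : Vn n, ω b a = - ω a b := by
    have key : ω + ω.flip = 0 := by
      apply (Pi.basisFun ℚ (Fin n ⊕ Fin n)).ext
      intro a
      apply (Pi.basisFun ℚ (Fin n ⊕ Fin n)).ext
      intro b
      simp only [Pi.basisFun_apply, LinearMap.add_apply, LinearMap.flip_apply,
        LinearMap.zero_apply]
      rcases a with a | a <;> rcases b with b | b
      · rw [show (Pi.single (Sum.inl a) 1 : Vn n) = pvec n a from rfl,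
          show (Pi.single (Sum.inl b) 1 : Vn n) = pvec n b from rfl, hpp, hpp]; ring
      · rw [show (Pi.single (Sum.inl a) 1 : Vn n) = pvec n a from rfl,
          show (Pi.single (Sum.inr b) 1 : Vn n) = qvec n b from rfl, hpq, hqp]
        rcases eq_or_ne a b with h | h
        · simp [h, eq_comm]
        · simp [h, Ne.symm h]
      · rw [show (Pi.single (Sum.inr a) 1 : Vn n) = qvec n a from rfl,
          show (Pi.single (Sum.inl b) 1 : Vn n) = pvec n b from rfl, hqp, hpq]
        rcases eq_or_ne a b with h | h
        · simp [h, eq_comm]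
        · simp [h, Ne.symm h]
      · rw [show (Pi.single (Sum.inr a) 1 : Vn n) = qvec n a from rfl,
          show (Pi.single (Sum.inr b) 1 : Vn n) = qvec n b from rfl, hqq, hqq]; ring
    intro a b
    have := LinearMap.congr_fun (LinearMap.congr_fun key a) b
    simp only [LinearMap.add_apply, LinearMap.flip_apply, LinearMap.zero_apply] at this
    linarith
  -- powers of the rotation
  open Fin.NatCast in
  have hpow : ∀ (k : ℕ) (u : Fin (i + 1 + (j + 1)) → Vn n),
      (ρm ^ k) (PiTensorProduct.tprod ℚ u)
        = PiTensorProduct.tprod ℚ (fun t => u (t + (k : Fin (i + 1 + (j + 1))))) := by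
    intro k
    induction k with
    | zero =>
      intro u
      simp only [pow_zero, Module.End.one_apply, Nat.cast_zero, add_zero]
    | succ k ih =>
      intro u
      rw [pow_succ, Module.End.mul_apply, hρm, ih]
      congr 1
      funext t
      congr 1
      rw [Nat.cast_add, Nat.cast_one]
      abel
  have hNpow : ρm ^ (i + 1 + (j + 1)) = 1 := by
    apply PiTensorProduct.ext
    apply MultilinearMap.ext
    intro u
    simp only [LinearMap.compMultilinearMap_apply, hpow, Module.End.one_apply]
    exact congrArg _ (funext fun t => by rw [Fin.natCast_self, add_zero])
  -- the index identity
  open Fin.NatCast in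
  have hidx : ∀ (v : Fin (i + 2) → Vn n) (w : Fin (j + 2) → Vn n)
      (t : Fin (i + 1 + (j + 1))),
      Fin.append (fun s : Fin (j + 1) => w s.succ) (fun s : Fin (i + 1) => v s.succ)
          (Fin.cast (by omega) t)
        = Fin.append (fun s : Fin (i + 1) => v s.succ) (fun s : Fin (j + 1) => w s.succ)
          (t + ((i + 1 : ℕ) : Fin (i + 1 + (j + 1)))) := by
    intro v w t
    have ht := t.isLt
    have hval : (t + ((i + 1 : ℕ) : Fin (i + 1 + (j + 1)))).val
        = (t.val + (i + 1)) % (i + 1 + (j + 1)) := by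
      rw [Fin.add_def]
      show (t.val + ((i + 1 : ℕ) : Fin (i + 1 + (j + 1))).val) % (i + 1 + (j + 1)) = _
      rw [Fin.val_natCast]
      exact Nat.add_mod_mod _ _ _
    rw [append_val, append_val]
    rcases lt_or_ge t.val (j + 1) with h1 | h1
    · have hm : (t.val + (i + 1)) % (i + 1 + (j + 1)) = t.val + (i + 1) :=
        Nat.mod_eq_of_lt (by omega)
      rw [dif_pos (by simp only [Fin.coe_cast]; omega :
            (Fin.cast (by omega : i + 1 + (j + 1) = j + 1 + (i + 1)) t).val < j + 1),
        dif_neg (by rw [hval, hm]; omega)]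
      simp only [Fin.coe_cast, hval, hm, Nat.add_sub_cancel]
    · have hm : (t.val + (i + 1)) % (i + 1 + (j + 1)) = t.val - (j + 1) := by
        rw [Nat.mod_eq_sub_mod (by omega)]
        have h2 : t.val + (i + 1) - (i + 1 + (j + 1)) = t.val - (j + 1) := by omega
        rw [h2, Nat.mod_eq_of_lt (by omega)]
      rw [dif_neg (by simp only [Fin.coe_cast]; omega), dif_pos (by rw [hval, hm]; omega)]
      simp only [Fin.coe_cast, hval, hm]
  -- the key pointwise identity
  open Fin.NatCast in
  have hkey : ∀ (w : Fin (j + 2) → Vn n) (v : Fin (i + 2) → Vn n),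
      C2 (PiTensorProduct.tprod ℚ w) (PiTensorProduct.tprod ℚ v)
        = -((ρm ^ (i + 1)) (C1 (PiTensorProduct.tprod ℚ v) (PiTensorProduct.tprod ℚ w))) := by
    intro w v
    rw [hC2, hC1, map_smul, hpow]
    have hT : PiTensorProduct.tprod ℚ
          (fun t : Fin (i + 1 + (j + 1)) =>
            Fin.append (fun s : Fin (j + 1) => w s.succ) (fun s : Fin (i + 1) => v s.succ)
              (Fin.cast (by omega) t))
        = PiTensorProduct.tprod ℚ
          (fun t : Fin (i + 1 + (j + 1)) =>
            Fin.append (fun s : Fin (i + 1) => v s.succ) (fun s : Fin (j + 1) => w s.succ)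
              (t + ((i + 1 : ℕ) : Fin (i + 1 + (j + 1))))) :=
      congrArg _ (funext fun t => hidx v w t)
    rw [hT, hω (v 0) (w 0)]
    exact @neg_smul ℚ _ _ _ _ ((ω (v 0)) (w 0))
      (PiTensorProduct.tprod ℚ
          (fun t : Fin (i + 1 + (j + 1)) =>
            Fin.append (fun s : Fin (i + 1) => v s.succ) (fun s : Fin (j + 1) => w s.succ)
              (t + ((i + 1 : ℕ) : Fin (i + 1 + (j + 1))))))
  -- extend to all tensors by bilinearity
  have hglobal : C2 y x = -((ρm ^ (i + 1)) (C1 x y)) := by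
    have hmaps : C2 = (C1.compr₂ (-(ρm ^ (i + 1)))).flip := by
      apply PiTensorProduct.ext
      apply MultilinearMap.ext
      intro w
      rw [LinearMap.compMultilinearMap_apply, LinearMap.compMultilinearMap_apply]
      apply PiTensorProduct.ext
      apply MultilinearMap.ext
      intro v
      simp only [LinearMap.compMultilinearMap_apply, LinearMap.flip_apply,
        LinearMap.neg_apply, LinearMap.compr₂_apply]
      exact hkey w v
    rw [hmaps]
    simp only [LinearMap.flip_apply, LinearMap.compr₂_apply, LinearMap.neg_apply]
  rw [hglobal]
  simp only [map_neg, Finset.sum_neg_distrib, smul_neg, neg_neg]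
  congr 1
  have hcomp : ∀ t : ℕ, (ρm ^ t) ((ρm ^ (i + 1)) (C1 x y)) = (ρm ^ (t + (i + 1))) (C1 x y) := by
    intro t
    conv_rhs => rw [pow_add]
    rfl
  rw [Finset.sum_congr rfl (fun t _ => hcomp t)]
  exact (sum_pow_rotate ρm (i + 1 + (j + 1)) (i + 1) (by omega) hNpow (C1 x y)).symm
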